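/- (Basic properties for OLFM) Let S be an OLFM system on an odd number n of actors. Then the satisfaction score SAT_S satisfies: (1) symmetry: if distinct actors i, j have S(i) = S(j) and P(i) = P(j), then SAT_S(i) = SAT_S(j); (2) dictator property: if S(i) = V \ {i}, then SAT_S(i) = 2^n; and (3) dictated independence: if S' is another OLFM system on the same vertex set and |P_G(i)| = |P_{G'}(i)| = 1, then SAT_S(i) = SAT_{S'}(i). -/
import Mathlib


open Finset

/-- The set of predecessors of `i` in the digraph with edge set `E`. -/
def preds {n : ℕ} (E : Finset (Fin n × Fin n)) (i : Fin n) : Finset (Fin n) :=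
  Finset.univ.filter (fun j => (j, i) ∈ E)

/-- The set of successors of `i` in the digraph with edge set `E`. -/
def succs {n : ℕ} (E : Finset (Fin n × Fin n)) (i : Fin n) : Finset (Fin n) :=
  Finset.univ.filter (fun j => (i, j) ∈ E)

/-- `E` is the edge set of an OLF system: every edge runs from a vertex with no
predecessors (an opinion leader) to a vertex with no successors (a follower). -/
def IsOLF {n : ℕ} (E : Finset (Fin n × Fin n)) : Prop :=
  ∀ e ∈ E, preds E e.1 = ∅ ∧ succs E e.2 = ∅

/-- One step of the unanimity rule: actor `i` adopts the common decision of its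
predecessors (as recorded in `c`) if they are nonempty and unanimous, and keeps
its own initial decision `x i` otherwise. -/
def unanStep {n : ℕ} (E : Finset (Fin n × Fin n)) (x c : Fin n → Bool) (i : Fin n) : Bool :=
  if (preds E i).Nonempty ∧ ∀ j ∈ preds E i, c j = true then true
  else if (preds E i).Nonempty ∧ ∀ j ∈ preds E i, c j = false then false
  else x i

/-- The collective decision vector of an OLF system. -/
def olfVec {n : ℕ} (E : Finset (Fin n × Fin n)) (x : Fin n → Bool) : Fin n → Bool :=
  unanStep E x x

/-- Simple majority over a decision vector. -/
def majority {n : ℕ} (c : Fin n → Bool) : Bool :=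
  decide ((Finset.univ.filter (fun i => c i = true)).card >
          (Finset.univ.filter (fun i => c i = false)).card)

/-- The collective decision function of an OLF system. -/
def olfC {n : ℕ} (E : Finset (Fin n × Fin n)) (x : Fin n → Bool) : Bool :=
  majority (olfVec E x)

/-- The satisfaction score of actor `i` under a collective decision making model `C`. -/
def SAT {n : ℕ} (C : (Fin n → Bool) → Bool) (i : Fin n) : ℕ :=
  (Finset.univ.filter (fun x : Fin n → Bool => C x = x i)).card

/-- `layer` witnesses that `E` is a layered digraph: every edge goes from a
vertex in some layer to a vertex in the layer immediately below. -/
def IsLayered {n : ℕ} (E : Finset (Fin n × Fin n)) (layer : Fin n → ℕ) : Prop :=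
  ∀ e ∈ E, layer e.2 = layer e.1 + 1

/-- `E` is the edge set of an OLFM system, i.e. a layered digraph. -/
def IsOLFM {n : ℕ} (E : Finset (Fin n × Fin n)) : Prop :=
  ∃ layer : Fin n → ℕ, IsLayered E layer

/-- The collective decision vector of an OLFM system, computed layer by layer:
since each layer only depends on the one above it, iterating the unanimity step
`n` times computes the stable, layer-by-layer collective decision vector. -/
def olfmVec {n : ℕ} (E : Finset (Fin n × Fin n)) (x : Fin n → Bool) : Fin n → Bool :=
  (fun c => unanStep E x c)^[n] x

/-- The collective decision function of an OLFM system. -/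
def olfmC {n : ℕ} (E : Finset (Fin n × Fin n)) (x : Fin n → Bool) : Bool :=
  majority (olfmVec E x)

section Aux
variable {n : ℕ}

lemma mem_preds {E : Finset (Fin n × Fin n)} {q j : Fin n} : q ∈ preds E j ↔ (q, j) ∈ E := by
  simp [preds]

lemma mem_succs {E : Finset (Fin n × Fin n)} {q j : Fin n} : q ∈ succs E j ↔ (j, q) ∈ E := by
  simp [succs]

lemma unanStep_congr (E : Finset (Fin n × Fin n)) (x : Fin n → Bool) {c c' : Fin n → Bool}
    (j : Fin n) (h : ∀ q ∈ preds E j, c q = c' q) :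
    unanStep E x c j = unanStep E x c' j := by
  unfold unanStep
  have e1 : (∀ q ∈ preds E j, c q = true) ↔ (∀ q ∈ preds E j, c' q = true) :=
    forall₂_congr (fun q hq => by rw [h q hq])
  have e2 : (∀ q ∈ preds E j, c q = false) ↔ (∀ q ∈ preds E j, c' q = false) :=
    forall₂_congr (fun q hq => by rw [h q hq])
  simp only [e1, e2]

lemma unanStep_update (E : Finset (Fin n × Fin n)) {x : Fin n → Bool} {i p : Fin n}
    (hp : preds E i = {p}) (b : Bool) (c : Fin n → Bool) :
    unanStep E (Function.update x i b) c = unanStep E x c := by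
  funext j
  by_cases hji : j = i
  · subst hji
    unfold unanStep
    rw [hp]
    simp only [Finset.mem_singleton, forall_eq, Finset.singleton_nonempty, true_and]
    cases c p <;> simp
  · unfold unanStep
    rw [Function.update_of_ne hji]

lemma lemma1 (E : Finset (Fin n × Fin n)) (layer : Fin n → ℕ) (hL : IsLayered E layer)
    (x x' : Fin n → Bool) (i : Fin n) (hx : ∀ j, j ≠ i → x' j = x j) :
    ∀ k j, layer j < layer i + k →
      (fun c => unanStep E x c)^[k] x' j = (fun c => unanStep E x c)^[k] x j := by
  intro k
  induction k with
  | zero =>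
    intro j hj
    exact hx j (fun h => by subst h; omega)
  | succ k ih =>
    intro j hj
    rw [Function.iterate_succ_apply', Function.iterate_succ_apply']
    apply unanStep_congr
    intro q hq
    have hql : layer j = layer q + 1 := hL (q, j) (mem_preds.mp hq)
    exact ih q (by omega)

lemma lemmaH (E : Finset (Fin n × Fin n)) (layer : Fin n → ℕ) (hL : IsLayered E layer)
    (x x' : Fin n → Bool) (i : Fin n) (hx : ∀ j, j ≠ i → x' j = x j) :
    ∀ k j, (fun c => unanStep E x c)^[k] x' j ≠ (fun c => unanStep E x c)^[k] x j →
      layer i ≤ layer j ∧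
        ∃ S : Finset (Fin n), (∀ v ∈ S, layer v ≤ layer j) ∧ S.card = layer j - layer i + 1 := by
  intro k
  induction k with
  | zero =>
    intro j hj
    have hji : j = i := by
      by_contra h
      exact hj (hx j h)
    subst hji
    exact ⟨le_refl _, {j}, by simp, by simp⟩
  | succ k ih =>
    intro j hj
    rw [Function.iterate_succ_apply', Function.iterate_succ_apply'] at hj
    have hq : ∃ q ∈ preds E j,
        (fun c => unanStep E x c)^[k] x' q ≠ (fun c => unanStep E x c)^[k] x q := by
      by_contra h
      push_neg at h
      exact hj (unanStep_congr E x j h)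
    obtain ⟨q, hqm, hqd⟩ := hq
    obtain ⟨hle, S, hSb, hSc⟩ := ih q hqd
    have hlq : layer j = layer q + 1 := hL (q, j) (mem_preds.mp hqm)
    refine ⟨by omega, insert j S, ?_, ?_⟩
    · intro v hv
      rcases Finset.mem_insert.mp hv with h | h
      · subst h; exact le_refl _
      · exact (hSb v h).trans (by omega)
    · rw [Finset.card_insert_of_notMem (fun h => by have := hSb j h; omega), hSc]
      omega

lemma olfmVec_update (E : Finset (Fin n × Fin n)) (layer : Fin n → ℕ) (hL : IsLayered E layer)
    (x : Fin n → Bool) {i p : Fin n} (hp : preds E i = {p}) (b : Bool) :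
    olfmVec E (Function.update x i b) = olfmVec E x := by
  have hx : ∀ j, j ≠ i → Function.update x i b j = x j :=
    fun j hji => Function.update_of_ne hji b x
  funext j
  unfold olfmVec
  have hstep : (fun c => unanStep E (Function.update x i b) c) = fun c => unanStep E x c :=
    funext (unanStep_update E hp b)
  rw [hstep]
  by_contra hne
  obtain ⟨hle, S, _, hSc⟩ := lemmaH E layer hL x _ i hx n j hne
  have hcard : S.card ≤ n := le_trans (Finset.card_le_univ S) (by simp)
  exact hne (lemma1 E layer hL x _ i hx n j (by omega))

lemma sat_half (hn1 : 1 ≤ n) (C : (Fin n → Bool) → Bool) (i : Fin n)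
    (hC : ∀ (x : Fin n → Bool) (b : Bool), C (Function.update x i b) = C x) :
    SAT C i = 2 ^ (n - 1) := by
  classical
  unfold SAT
  have hinv : ∀ x : Fin n → Bool,
      Function.update (Function.update x i (!x i)) i (!(Function.update x i (!x i) i)) = x := by
    intro x
    simp [Function.update_self, Function.update_idem]
  have key : (Finset.univ.filter (fun x : Fin n → Bool => C x = x i)).card
      = (Finset.univ.filter (fun x : Fin n → Bool => ¬(C x = x i))).card := by
    refine Finset.card_bij' (fun x _ => Function.update x i (!x i))
      (fun x _ => Function.update x i (!x i)) ?_ ?_ ?_ ?_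
    · intro x hx
      simp only [Finset.mem_filter, Finset.mem_univ, true_and] at hx ⊢
      rw [hC, Function.update_self, hx]
      cases x i <;> simp
    · intro x hx
      simp only [Finset.mem_filter, Finset.mem_univ, true_and] at hx ⊢
      rw [hC, Function.update_self]
      cases h : C x <;> rw [h] at hx <;> revert hx <;> cases x i <;> simp
    · intro x _
      exact hinv x
    · intro x _
      exact hinv x
  have total := Finset.card_filter_add_card_filter_not
    (s := (Finset.univ : Finset (Fin n → Bool))) (fun x : Fin n → Bool => C x = x i)
  have hcard : (Finset.univ : Finset (Fin n → Bool)).card = 2 ^ n := by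
    rw [Finset.card_univ, Fintype.card_fun]
    simp
  have h2 : 2 ^ n = 2 * 2 ^ (n - 1) := by
    obtain ⟨m, rfl⟩ := Nat.exists_eq_succ_of_ne_zero (Nat.one_le_iff_ne_zero.mp hn1)
    rw [Nat.succ_sub_one, pow_succ, Nat.mul_comm]
  rw [hcard, ← key] at total
  refine Nat.eq_of_mul_eq_mul_left (show 0 < 2 by norm_num) ?_
  rw [two_mul, total, h2]

end Aux

section Aux2
variable {n : ℕ}

lemma majority_const (hn1 : 0 < n) (b : Bool) : majority (fun _ : Fin n => b) = b := by
  cases b <;> simp [majority, Finset.card_univ] <;> omega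

lemma dictator (E : Finset (Fin n × Fin n)) (layer : Fin n → ℕ) (hL : IsLayered E layer)
    (hn : Odd n) (i : Fin n) (hs : succs E i = Finset.univ \ {i}) :
    SAT (olfmC E) i = 2 ^ n := by
  have hn1 : 0 < n := hn.pos
  have hno : ∀ a : Fin n, (a, a) ∉ E := fun a h => by simpa using hL (a, a) h
  have hEi : ∀ k : Fin n, k ≠ i → (i, k) ∈ E := by
    intro k hk
    have : k ∈ succs E i := by rw [hs]; simp [hk]
    exact mem_succs.mp this
  have hpredsi : preds E i = ∅ := by
    rw [Finset.eq_empty_iff_forall_notMem]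
    intro a ha
    have hai : (a, i) ∈ E := mem_preds.mp ha
    have hane : a ≠ i := fun h => hno i (h ▸ hai)
    have h1 := hL (a, i) hai
    have h2 := hL (i, a) (hEi a hane)
    simp at h1 h2
    omega
  have hpredsk : ∀ k : Fin n, k ≠ i → preds E k = {i} := by
    intro k hk
    ext a
    rw [mem_preds, Finset.mem_singleton]
    constructor
    · intro hak
      by_contra hai
      have h1 := hL (a, k) hak
      have h2 := hL (i, k) (hEi k hk)
      have h3 := hL (i, a) (hEi a hai)
      simp at h1 h2 h3
      omega
    · intro h; subst h; exact hEi k hk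
  have hstep : ∀ x c : Fin n → Bool,
      unanStep E x c = fun v => if v = i then x i else c i := by
    intro x c
    funext v
    by_cases hv : v = i
    · subst hv
      unfold unanStep
      rw [hpredsi]
      simp
    · unfold unanStep
      rw [hpredsk v hv]
      simp only [Finset.mem_singleton, forall_eq, Finset.singleton_nonempty, true_and, if_neg hv]
      cases c i <;> simp
  have hvec : ∀ x : Fin n → Bool, olfmVec E x = fun _ => x i := by
    intro x
    unfold olfmVec
    obtain ⟨m, rfl⟩ := Nat.exists_eq_succ_of_ne_zero (Nat.pos_iff_ne_zero.mp hn1)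
    rw [Function.iterate_succ_apply]
    have h1 : unanStep E x x = fun _ => x i := by
      rw [hstep x x]
      funext v
      split <;> rfl
    rw [h1]
    apply Function.iterate_fixed
    rw [hstep]
    funext v
    split <;> rfl
  have hC : ∀ x : Fin n → Bool, olfmC E x = x i := by
    intro x
    unfold olfmC
    rw [hvec x, majority_const hn1]
  unfold SAT
  rw [Finset.filter_true_of_mem (fun x _ => hC x), Finset.card_univ, Fintype.card_fun]
  simp

lemma swap_edge (E : Finset (Fin n × Fin n)) (layer : Fin n → ℕ) (hL : IsLayered E layer)
    {i j : Fin n} (hij : i ≠ j) (hs : succs E i = succs E j) (hp : preds E i = preds E j) :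
    ∀ a b : Fin n, (a, b) ∈ E → (Equiv.swap i j a, Equiv.swap i j b) ∈ E := by
  have hno : ∀ a : Fin n, (a, a) ∉ E := fun a h => by simpa using hL (a, a) h
  have hijE : (i, j) ∉ E := by
    intro h
    have h2 : j ∈ succs E i := mem_succs.mpr h
    rw [hs] at h2
    exact hno j (mem_succs.mp h2)
  have hjiE : (j, i) ∉ E := by
    intro h
    have h2 : i ∈ succs E j := mem_succs.mpr h
    rw [← hs] at h2
    exact hno i (mem_succs.mp h2)
  intro a b hab
  have hne : a ≠ b := fun h => hno b (h ▸ hab)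
  rcases eq_or_ne a i with rfl | hai
  · rcases eq_or_ne b j with rfl | hbj
    · exact absurd hab hijE
    · rw [Equiv.swap_apply_left, Equiv.swap_apply_of_ne_of_ne (Ne.symm hne) hbj]
      have h2 : b ∈ succs E a := mem_succs.mpr hab
      rw [hs] at h2
      exact mem_succs.mp h2
  · rcases eq_or_ne a j with rfl | haj
    · rcases eq_or_ne b i with rfl | hbi
      · exact absurd hab hjiE
      · rw [Equiv.swap_apply_right, Equiv.swap_apply_of_ne_of_ne hbi (Ne.symm hne)]
        have h2 : b ∈ succs E a := mem_succs.mpr hab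
        rw [← hs] at h2
        exact mem_succs.mp h2
    · rw [Equiv.swap_apply_of_ne_of_ne hai haj]
      rcases eq_or_ne b i with rfl | hbi
      · rw [Equiv.swap_apply_left]
        have h2 : a ∈ preds E b := mem_preds.mpr hab
        rw [hp] at h2
        exact mem_preds.mp h2
      · rcases eq_or_ne b j with rfl | hbj
        · rw [Equiv.swap_apply_right]
          have h2 : a ∈ preds E b := mem_preds.mpr hab
          rw [← hp] at h2
          exact mem_preds.mp h2
        · rw [Equiv.swap_apply_of_ne_of_ne hbi hbj]
          exact hab

lemma unanStep_swap (E : Finset (Fin n × Fin n)) {i j : Fin n}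
    (hE : ∀ a b : Fin n, (a, b) ∈ E ↔ (Equiv.swap i j a, Equiv.swap i j b) ∈ E)
    (x c : Fin n → Bool) (v : Fin n) :
    unanStep E x c (Equiv.swap i j v)
      = unanStep E (fun u => x (Equiv.swap i j u)) (fun u => c (Equiv.swap i j u)) v := by
  set σ := Equiv.swap i j with hσ
  have hmem : ∀ u w : Fin n, u ∈ preds E w ↔ σ u ∈ preds E (σ w) := by
    intro u w
    rw [mem_preds, mem_preds]
    exact hE u w
  have hmem' : ∀ u, u ∈ preds E (σ v) ↔ σ u ∈ preds E v := by
    intro u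
    have h2 := hmem (σ u) v
    rw [hσ, Equiv.swap_apply_self] at h2
    exact h2.symm
  have hne : (preds E (σ v)).Nonempty ↔ (preds E v).Nonempty := by
    constructor
    · rintro ⟨u, hu⟩; exact ⟨σ u, (hmem' u).mp hu⟩
    · rintro ⟨u, hu⟩; exact ⟨σ u, (hmem u v).mp hu⟩
  have hall : ∀ b : Bool,
      (∀ u ∈ preds E (σ v), c u = b) ↔ (∀ u ∈ preds E v, c (σ u) = b) := by
    intro b
    constructor
    · intro h u hu; exact h (σ u) ((hmem u v).mp hu)
    · intro h u hu
      have h2 := h (σ u) ((hmem' u).mp hu)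
      rwa [hσ, Equiv.swap_apply_self] at h2
  unfold unanStep
  simp only [hne, hall]

lemma olfmVec_swap (E : Finset (Fin n × Fin n)) {i j : Fin n}
    (hE : ∀ a b : Fin n, (a, b) ∈ E ↔ (Equiv.swap i j a, Equiv.swap i j b) ∈ E)
    (x : Fin n → Bool) :
    olfmVec E (fun u => x (Equiv.swap i j u)) = fun v => olfmVec E x (Equiv.swap i j v) := by
  unfold olfmVec
  suffices h : ∀ k, (fun c => unanStep E (fun u => x (Equiv.swap i j u)) c)^[k]
        (fun u => x (Equiv.swap i j u))
      = fun v => ((fun c => unanStep E x c)^[k] x) (Equiv.swap i j v) from h n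
  intro k
  induction k with
  | zero => rfl
  | succ k ih =>
    rw [Function.iterate_succ_apply', Function.iterate_succ_apply', ih]
    funext v
    exact (unanStep_swap E hE x _ v).symm

lemma majority_comp (σ : Equiv.Perm (Fin n)) (c : Fin n → Bool) :
    majority (fun v => c (σ v)) = majority c := by
  unfold majority
  have hb : ∀ b : Bool, (Finset.univ.filter (fun v => c (σ v) = b)).card
      = (Finset.univ.filter (fun v => c v = b)).card := by
    intro b
    refine Finset.card_bij' (fun v _ => σ v) (fun v _ => σ.symm v) ?_ ?_ ?_ ?_
    · intro a ha
      simp only [Finset.mem_filter, Finset.mem_univ, true_and] at ha ⊢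
      exact ha
    · intro a ha
      simp only [Finset.mem_filter, Finset.mem_univ, true_and] at ha ⊢
      simpa using ha
    · intro a _
      simp
    · intro a _
      simp
  rw [hb true, hb false]

end Aux2


/-- Basic properties of the satisfaction score in OLFM systems: symmetry, the
dictator property, and dictated independence. -/
theorem olfm_basic_properties (n : ℕ) (hn : Odd n) (E : Finset (Fin n × Fin n))
    (layer : Fin n → ℕ) (hL : IsLayered E layer) :
    -- (1) symmetry
    (∀ i j : Fin n, i ≠ j → succs E i = succs E j → preds E i = preds E j →
      SAT (olfmC E) i = SAT (olfmC E) j) ∧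
    -- (2) dictator property
    (∀ i : Fin n, succs E i = Finset.univ \ {i} → SAT (olfmC E) i = 2 ^ n) ∧
    -- (3) dictated independence
    (∀ (E' : Finset (Fin n × Fin n)) (layer' : Fin n → ℕ), IsLayered E' layer' →
      ∀ i : Fin n, (preds E i).card = 1 → (preds E' i).card = 1 →
      SAT (olfmC E) i = SAT (olfmC E') i) := by
  refine ⟨?_, ?_, ?_⟩
  · intro i j hij hs hp
    have hE : ∀ a b : Fin n, (a, b) ∈ E ↔ (Equiv.swap i j a, Equiv.swap i j b) ∈ E := by
      intro a b
      constructor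
      · exact swap_edge E layer hL hij hs hp a b
      · intro h
        have h2 := swap_edge E layer hL hij hs hp _ _ h
        rwa [Equiv.swap_apply_self, Equiv.swap_apply_self] at h2
    have hC : ∀ x : Fin n → Bool, olfmC E (fun u => x (Equiv.swap i j u)) = olfmC E x := by
      intro x
      unfold olfmC
      rw [olfmVec_swap E hE x]
      exact majority_comp (Equiv.swap i j) (olfmVec E x)
    unfold SAT
    refine Finset.card_bij' (fun x _ => fun v => x (Equiv.swap i j v))
      (fun x _ => fun v => x (Equiv.swap i j v)) ?_ ?_ ?_ ?_
    · intro x hx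
      simp only [Finset.mem_filter, Finset.mem_univ, true_and] at hx ⊢
      rw [hC x, Equiv.swap_apply_right]
      exact hx
    · intro x hx
      simp only [Finset.mem_filter, Finset.mem_univ, true_and] at hx ⊢
      rw [hC x, Equiv.swap_apply_left]
      exact hx
    · intro x _
      funext v
      simp [Equiv.swap_apply_self]
    · intro x _
      funext v
      simp [Equiv.swap_apply_self]
  · intro i hs
    exact dictator E layer hL hn i hs
  · intro E' layer' hL' i h1 h1'
    obtain ⟨p, hp⟩ := Finset.card_eq_one.mp h1
    obtain ⟨p', hp'⟩ := Finset.card_eq_one.mp h1'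
    have hC : ∀ (x : Fin n → Bool) (b : Bool), olfmC E (Function.update x i b) = olfmC E x := by
      intro x b
      unfold olfmC
      rw [olfmVec_update E layer hL x hp b]
    have hC' : ∀ (x : Fin n → Bool) (b : Bool), olfmC E' (Function.update x i b) = olfmC E' x := by
      intro x b
      unfold olfmC
      rw [olfmVec_update E' layer' hL' x hp' b]
    rw [sat_half hn.pos _ i hC, sat_half hn.pos _ i hC']
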